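/- (Kernel smoothing bias bound.) Let k : ℝ → ℝ be a bounded, measurable, symmetric kernel (k(−u) = k(u) for all u) with ∫ k(u) du = 1 and ∫ u² |k(u)| du < ∞, and let f : ℝ → ℝ be an integrable probability density that is twice differentiable with |f''(u)| ≤ B for all u. Then for every x ∈ ℝ and every h > 0, |∫ h⁻¹ k((u − x)/h) f(u) du − f(x)| ≤ (B/2) h² ∫ u² |k(u)| du. In particular the smoothing bias of the kernel density estimator is of order h². -/

import Mathlib

open MeasureTheory

private lemma deriv_lipschitz_bound (f : ℝ → ℝ) (B : ℝ)
    (hf_diff2 : ∀ u, DifferentiableAt ℝ (deriv f) u)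
    (hf''_bdd : ∀ u, |deriv (deriv f) u| ≤ B) (a b : ℝ) :
    |deriv f b - deriv f a| ≤ B * |b - a| := by
  have := Convex.norm_image_sub_le_of_norm_deriv_le (f := deriv f) (s := Set.univ)
    (fun x _ => hf_diff2 x)
    (fun x _ => by simpa [Real.norm_eq_abs] using hf''_bdd x)
    convex_univ (Set.mem_univ a) (Set.mem_univ b)
  simpa [Real.norm_eq_abs] using this

private lemma taylor_second_order (f : ℝ → ℝ) (B : ℝ)
    (hf_diff : ∀ u, DifferentiableAt ℝ f u)
    (hf_diff2 : ∀ u, DifferentiableAt ℝ (deriv f) u)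
    (hf''_bdd : ∀ u, |deriv (deriv f) u| ≤ B) (x y : ℝ) :
    |f y - f x - (y - x) * deriv f x| ≤ B / 2 * (y - x) ^ 2 := by
  have hB0 : 0 ≤ B := le_trans (abs_nonneg _) (hf''_bdd 0)
  have hcont : Continuous (deriv f) :=
    Differentiable.continuous (fun u => hf_diff2 u)
  have hii : IntervalIntegrable (deriv f) volume x y := hcont.intervalIntegrable x y
  have hftc : ∫ s in x..y, deriv f s = f y - f x :=
    intervalIntegral.integral_deriv_eq_sub (fun s _ => hf_diff s) hii
  have hconst : ∫ s in x..y, deriv f x = (y - x) * deriv f x := by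
    simp [mul_comm]
  have hdiff : f y - f x - (y - x) * deriv f x
      = ∫ s in x..y, (deriv f s - deriv f x) := by
    rw [intervalIntegral.integral_sub hii (intervalIntegrable_const), hftc, hconst]
  have habs : IntervalIntegrable (fun s => B * |s - x|) volume x y :=
    (continuous_const.mul ((continuous_id.sub continuous_const).abs)).intervalIntegrable x y
  have hb : ∀ s, ‖deriv f s - deriv f x‖ ≤ B * |s - x| := fun s => by
    simpa [Real.norm_eq_abs] using deriv_lipschitz_bound f B hf_diff2 hf''_bdd x s
  have key : |f y - f x - (y - x) * deriv f x| ≤ |∫ s in x..y, B * |s - x| ∂volume| := by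
    rw [hdiff, ← Real.norm_eq_abs]
    exact intervalIntegral.norm_integral_le_abs_of_norm_le
      (Filter.Eventually.of_forall fun t => hb t) habs
  refine key.trans (le_of_eq ?_)
  rcases le_total x y with hxy | hxy
  · have e : (∫ s in x..y, B * |s - x|) = ∫ s in x..y, B * (s - x) := by
      apply intervalIntegral.integral_congr
      intro s hs
      rw [Set.uIcc_of_le hxy] at hs
      show B * |s - x| = B * (s - x)
      rw [abs_of_nonneg (by linarith [hs.1])]
    have e2 : (∫ s in x..y, (s - x)) = (y - x) ^ 2 / 2 := by
      rw [intervalIntegral.integral_comp_sub_right (fun s => s) x]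
      simp [integral_id]
    rw [e, intervalIntegral.integral_const_mul, e2, abs_of_nonneg (by positivity)]
    ring
  · have e : (∫ s in x..y, B * |s - x|) = ∫ s in x..y, B * (x - s) := by
      apply intervalIntegral.integral_congr
      intro s hs
      rw [Set.uIcc_of_ge hxy] at hs
      show B * |s - x| = B * (x - s)
      rw [abs_of_nonpos (by linarith [hs.2]), neg_sub]
    have e2 : (∫ s in x..y, (x - s)) = -((x - y) ^ 2) / 2 := by
      rw [intervalIntegral.integral_comp_sub_left (fun s => s) x]
      rw [integral_id]
      ring
    rw [e, intervalIntegral.integral_const_mul, e2,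
      show B * (-((x - y) ^ 2) / 2) = -(B * ((x - y) ^ 2 / 2)) by ring,
      abs_neg, abs_of_nonneg (by positivity)]
    ring

/-- kernel smoothing bias bound. For a bounded measurable symmetric
kernel `k` integrating to one with finite second absolute moment, and an integrable
probability density `f` that is twice differentiable with `|f''| ≤ B`, the smoothing bias
satisfies, for every `x` and bandwidth `h > 0`,
`|∫ h⁻¹ k((u − x)/h) f u du − f x| ≤ (B/2) h² ∫ u² |k u| du`;
in particular it is of order `h²`. -/
theorem kernel_smoothing_bias_bound
    (k f : ℝ → ℝ) (B : ℝ)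
    (hk_meas : Measurable k)
    (hk_bdd : ∃ C, ∀ u, |k u| ≤ C)
    (hk_symm : ∀ u, k (-u) = k u)
    (hk_one : ∫ u, k u = 1)
    (hk_mom : Integrable fun u => u ^ 2 * |k u|)
    (hf_int : Integrable f)
    (hf_nonneg : ∀ u, 0 ≤ f u)
    (hf_one : ∫ u, f u = 1)
    (hf_diff : ∀ u, DifferentiableAt ℝ f u)
    (hf_diff2 : ∀ u, DifferentiableAt ℝ (deriv f) u)
    (hf''_bdd : ∀ u, |deriv (deriv f) u| ≤ B) :
    ∀ (x h : ℝ), 0 < h →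
      |(∫ u, h⁻¹ * k ((u - x) / h) * f u) - f x|
        ≤ B / 2 * h ^ 2 * ∫ u, u ^ 2 * |k u| := by
  intro x h hh
  have hB0 : 0 ≤ B := le_trans (abs_nonneg _) (hf''_bdd 0)
  obtain ⟨C, hC⟩ := hk_bdd
  have hkint : Integrable k := integrable_of_integral_eq_one hk_one
  -- change of variables
  have hsub : ∀ t : ℝ, h * t / h = t := fun t => by field_simp
  have hshift : (∫ u, h⁻¹ * k ((u - x) / h) * f u)
      = ∫ u, h⁻¹ * (k (u / h) * f (u + x)) := by
    rw [← integral_add_right_eq_self (fun u => h⁻¹ * k ((u - x) / h) * f u) x]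
    simp [mul_assoc]
  have hco := MeasureTheory.Measure.integral_comp_mul_left
    (fun u => k (u / h) * f (u + x)) h
  simp only [hsub] at hco
  have hkey : (∫ u, h⁻¹ * k ((u - x) / h) * f u) = ∫ t, k t * f (x + h * t) := by
    rw [hshift, integral_const_mul]
    have hcomm : (∫ t : ℝ, k t * f (x + h * t)) = ∫ t : ℝ, k t * f (h * t + x) := by
      congr 1; funext t; rw [add_comm x (h * t)]
    rw [hcomm, hco, abs_of_pos (inv_pos.mpr hh), smul_eq_mul]
  -- integrability facts
  have hfc : Continuous f := Differentiable.continuous (fun u => hf_diff u)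
  have hfa0 : Integrable (fun u : ℝ => f (u + x)) := hf_int.comp_add_right x
  have hfa : Integrable (fun t : ℝ => f (x + h * t)) := by
    have := (hfa0.comp_mul_left' hh.ne' : Integrable fun t : ℝ => f (h * t + x))
    simpa [add_comm] using this
  have I1 : Integrable (fun t => k t * f (x + h * t)) :=
    hfa.bdd_mul (c := C) hk_meas.aestronglyMeasurable
      (Filter.Eventually.of_forall fun t => by simpa [Real.norm_eq_abs] using hC t)
  have Itk : Integrable (fun t => t * k t) := by
    refine Integrable.mono' (hkint.abs.add hk_mom)
      ((measurable_id.mul hk_meas).aestronglyMeasurable) ?_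
    refine Filter.Eventually.of_forall fun t => ?_
    rw [Real.norm_eq_abs, abs_mul]
    have h1 : |t| ≤ 1 + t ^ 2 := by nlinarith [abs_nonneg t, sq_abs t]
    calc |t| * |k t| ≤ (1 + t ^ 2) * |k t| :=
          mul_le_mul_of_nonneg_right h1 (abs_nonneg _)
      _ = |k t| + t ^ 2 * |k t| := by ring
  -- odd moment vanishes
  have hodd : (∫ t, t * k t) = 0 := by
    have h1 : (∫ t : ℝ, (-t) * k (-t)) = ∫ t, t * k t :=
      integral_neg_eq_self (fun t => t * k t) volume
    have h2 : (∫ t : ℝ, (-t) * k (-t)) = - ∫ t, t * k t := by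
      simp_rw [hk_symm, neg_mul]
      exact integral_neg _
    linarith [h1.symm.trans h2]
  -- expand
  have I2 : Integrable (fun t => k t * f x) := hkint.mul_const (f x)
  have I3 : Integrable (fun t => k t * (h * t * deriv f x)) := by
    have : (fun t => k t * (h * t * deriv f x))
        = fun t => (h * deriv f x) * (t * k t) := by funext t; ring
    rw [this]
    exact Itk.const_mul _
  have e1 : (∫ t, k t * f x) = f x := by
    rw [integral_mul_const, hk_one, one_mul]
  have e2 : (∫ t, k t * (h * t * deriv f x)) = 0 := by
    have : (fun t => k t * (h * t * deriv f x))
        = fun t => (h * deriv f x) * (t * k t) := by funext t; ring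
    rw [this, integral_const_mul, hodd, mul_zero]
  have expand : (∫ t, k t * f (x + h * t)) - f x
      = ∫ t, k t * (f (x + h * t) - f x - h * t * deriv f x) := by
    have : (fun t => k t * (f (x + h * t) - f x - h * t * deriv f x))
        = fun t => (k t * f (x + h * t) - k t * f x) - k t * (h * t * deriv f x) := by
      funext t; ring
    have I12 : Integrable (fun t => k t * f (x + h * t) - k t * f x) := I1.sub I2
    rw [this, integral_sub I12 I3, integral_sub I1 I2, e1, e2]
    ring
  -- final bound
  rw [hkey, expand]
  have hbound : ∀ t : ℝ, ‖k t * (f (x + h * t) - f x - h * t * deriv f x)‖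
      ≤ B / 2 * h ^ 2 * (t ^ 2 * |k t|) := by
    intro t
    have ht := taylor_second_order f B hf_diff hf_diff2 hf''_bdd x (x + h * t)
    have h3 : x + h * t - x = h * t := by ring
    rw [h3] at ht
    rw [Real.norm_eq_abs, abs_mul]
    calc |k t| * |f (x + h * t) - f x - h * t * deriv f x|
        ≤ |k t| * (B / 2 * (h * t) ^ 2) :=
          mul_le_mul_of_nonneg_left ht (abs_nonneg _)
      _ = B / 2 * h ^ 2 * (t ^ 2 * |k t|) := by ring
  calc |∫ t, k t * (f (x + h * t) - f x - h * t * deriv f x)|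
      ≤ ∫ t, B / 2 * h ^ 2 * (t ^ 2 * |k t|) := by
        rw [← Real.norm_eq_abs]
        exact norm_integral_le_of_norm_le (hk_mom.const_mul _)
          (Filter.Eventually.of_forall hbound)
    _ = B / 2 * h ^ 2 * ∫ t, t ^ 2 * |k t| := integral_const_mul _ _
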